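/- Let p be an odd prime and z a positive integer such that φ(p*z) = ((p-1)/2) * z. Then z = 2^β * p^s for some integers β ≥ 1 and s ≥ 0, and conversely every such z satisfies the equation. -/

import Mathlib

lemma aux_two_totient (m : ℕ) (hm : 0 < m) (h : 2 * m.totient = m) :
    ∃ β : ℕ, 1 ≤ β ∧ m = 2 ^ β := by
  have h2 : Nat.Prime 2 := Nat.prime_two
  set k := m.factorization 2 with hk
  set t := m / 2 ^ k with ht
  have hmt : 2 ^ k * t = m := Nat.ordProj_mul_ordCompl_eq_self m 2
  have htpos : 0 < t := Nat.ordCompl_pos 2 hm.ne'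
  have hcop : Nat.Coprime 2 t := Nat.coprime_ordCompl h2 hm.ne'
  have hkpos : 1 ≤ k := by
    have hdvd : 2 ∣ m := ⟨m.totient, h.symm⟩
    exact (Nat.Prime.dvd_iff_one_le_factorization h2 hm.ne').mp hdvd
  have hcop' : Nat.Coprime (2 ^ k) t := Nat.Coprime.pow_left _ hcop
  have htot : m.totient = 2 ^ (k - 1) * t.totient := by
    rw [← hmt, Nat.totient_mul hcop', Nat.totient_prime_pow h2 hkpos]
    ring_nf
  have key : 2 ^ k * t.totient = 2 ^ k * t := by
    have : 2 * (2 ^ (k - 1) * t.totient) = 2 ^ k * t := by rw [← htot, h, ← hmt]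
    calc 2 ^ k * t.totient = 2 * (2 ^ (k - 1) * t.totient) := by
          rw [← mul_assoc, ← pow_succ']
          congr 2
          omega
      _ = 2 ^ k * t := this
  have ht1 : t.totient = t := Nat.eq_of_mul_eq_mul_left (pow_pos (by norm_num) k) key
  have : t = 1 := by
    by_contra hne
    have h1t : 1 < t := by omega
    exact absurd ht1 (Nat.totient_lt t h1t).ne
  exact ⟨k, hkpos, by rw [← hmt, this, mul_one]⟩

/-- For an odd prime `p` and positive integer `z`, `φ(p*z) = ((p-1)/2) * z` iff
`z = 2^β * p^s` with `β ≥ 1, s ≥ 0`. -/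
theorem stmt_16 (p z : ℕ) (hp : p.Prime) (hpodd : Odd p) (hz : 0 < z) :
    Nat.totient (p * z) = ((p - 1) / 2) * z ↔
      ∃ β s : ℕ, 1 ≤ β ∧ z = 2 ^ β * p ^ s := by
  obtain ⟨q, hq⟩ : ∃ q, p - 1 = 2 * q := by
    obtain ⟨c, hc⟩ := hpodd
    exact ⟨c, by omega⟩
  have hp3 : 3 ≤ p := by
    have := hp.two_le
    rcases hpodd with ⟨c, hc⟩
    omega
  have hqpos : 0 < q := by omega
  have hqdiv : (p - 1) / 2 = q := by omega
  constructor
  · intro h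
    set s := z.factorization p with hs
    set m := z / p ^ s with hm
    have hzm : p ^ s * m = z := Nat.ordProj_mul_ordCompl_eq_self z p
    have hmpos : 0 < m := Nat.ordCompl_pos p hz.ne'
    have hcop : Nat.Coprime p m := Nat.coprime_ordCompl hp hz.ne'
    have hcop' : Nat.Coprime (p ^ (s + 1)) m := Nat.Coprime.pow_left _ hcop
    have htot : (p * z).totient = p ^ s * (p - 1) * m.totient := by
      rw [← hzm, ← mul_assoc, ← pow_succ', Nat.totient_mul hcop',
        Nat.totient_prime_pow hp (Nat.succ_pos s), Nat.succ_sub_one]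
    rw [htot, hqdiv, ← hzm] at h
    -- p^s * (p-1) * φ m = q * (p^s * m)
    have hcancel : 2 * m.totient = m := by
      have hps : 0 < p ^ s := pow_pos hp.pos s
      have h' : q * (p ^ s * (2 * m.totient)) = q * (p ^ s * m) := by
        calc q * (p ^ s * (2 * m.totient)) = p ^ s * (2 * q) * m.totient := by ring
          _ = p ^ s * (p - 1) * m.totient := by rw [hq]
          _ = q * (p ^ s * m) := h
      have := Nat.eq_of_mul_eq_mul_left hqpos h'
      exact Nat.eq_of_mul_eq_mul_left hps this
    obtain ⟨β, hβ, hmβ⟩ := aux_two_totient m hmpos hcancel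
    exact ⟨β, s, hβ, by rw [← hzm, hmβ, mul_comm]⟩
  · rintro ⟨β, s, hβ, rfl⟩
    have hcop : Nat.Coprime (p ^ (s + 1)) (2 ^ β) := by
      exact Nat.Coprime.pow _ _ (Nat.coprime_two_right.mpr hpodd)
    have : p * (2 ^ β * p ^ s) = p ^ (s + 1) * 2 ^ β := by ring
    have h2 : 2 ^ β = 2 ^ (β - 1) * 2 := by
      rw [← pow_succ]; congr 1; omega
    rw [this, Nat.totient_mul hcop, Nat.totient_prime_pow hp (Nat.succ_pos s),
      Nat.totient_prime_pow Nat.prime_two hβ, Nat.succ_sub_one, hqdiv, hq, h2]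
    ring
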